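/- Let m_α, m_β be positive real numbers with m_α ≠ m_β, and set ρ = ((√m_α − √m_β)/(√m_α + √m_β))²; then 0 < ρ < 1. Let ξ, ξ*, ξ′, ξ*′ ∈ ℝ³, q ≥ 0, let η ∈ ℝ³ be a unit vector, and let ΔI ∈ ℝ be such that ξ′ = ξ − q η, ξ*′ = ξ* − (m_α/m_β) q η, and m_α|ξ|²/2 + m_β|ξ*′|²/2 = m_α|ξ′|²/2 + m_β|ξ*|²/2 + ΔI. Then m_α|ξ′|² + m_β|ξ*′|² ≥ ρ(m_α|ξ|² + m_β|ξ*|²) + (1+ρ)·((m_α − m_β)/(m_α + m_β))·ΔI ≥ ρ(m_α|ξ|² + m_β|ξ*|²) − 2|ΔI|. -/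

import Mathlib

open Real

private lemma auxW (Y v q a b W : ℝ) (hb : b ≠ 0)
    (hW : W = Y - 2 * (a ^ 2 / b ^ 2 * q) * v + (a ^ 2 / b ^ 2 * q) ^ 2) :
    b ^ 4 * W = b ^ 4 * Y - 2 * a ^ 2 * b ^ 2 * q * v + a ^ 4 * q ^ 2 := by
  rw [hW]; field_simp

private lemma auxCoef (a b ρ : ℝ) (ha : 0 < a) (hb : 0 < b)
    (hρ : ρ = ((a - b) / (a + b)) ^ 2) :
    (1 + ρ) * ((a ^ 2 - b ^ 2) / (a ^ 2 + b ^ 2)) = 2 * (a - b) / (a + b) := by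
  have h1 : a ^ 2 + b ^ 2 ≠ 0 := by positivity
  have h2 : a + b ≠ 0 := by positivity
  rw [hρ]; field_simp; ring

/-- The core scalar inequality. -/
private lemma auxKey (a b q u v X Y Z W ΔI : ℝ) (ha : 0 < a) (hb : 0 < b)
    (hXu : u ^ 2 ≤ X) (hYv : v ^ 2 ≤ Y)
    (hZ : Z = X - 2 * q * u + q ^ 2)
    (hWb : b ^ 4 * W = b ^ 4 * Y - 2 * a ^ 2 * b ^ 2 * q * v + a ^ 4 * q ^ 2)
    (hΔ : a ^ 2 * X / 2 + b ^ 2 * W / 2 = a ^ 2 * Z / 2 + b ^ 2 * Y / 2 + ΔI) :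
    ((a - b) / (a + b)) ^ 2 * (a ^ 2 * X + b ^ 2 * Y) + 2 * (a - b) / (a + b) * ΔI
      ≤ a ^ 2 * Z + b ^ 2 * W := by
  have hab : 0 < a + b := by linarith
  have hΔ2 : 2 * b ^ 2 * ΔI
      = 2 * a ^ 2 * b ^ 2 * q * u - a ^ 2 * b ^ 2 * q ^ 2
        - 2 * a ^ 2 * b ^ 2 * q * v + a ^ 4 * q ^ 2 := by
    linear_combination -2 * b ^ 2 * hΔ - a ^ 2 * b ^ 2 * hZ + hWb
  have hG : b ^ 2 * ((a + b) ^ 2 * (a ^ 2 * Z + b ^ 2 * W)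
        - (a - b) ^ 2 * (a ^ 2 * X + b ^ 2 * Y)
        - 2 * (a - b) * (a + b) * ΔI)
      = 2 * a * b * (a * b * u + b ^ 2 * v - a * (a + b) * q) ^ 2
        + 2 * a * b * (b * (a * u - b * v)) ^ 2
        + 4 * a ^ 3 * b ^ 3 * (X - u ^ 2)
        + 4 * a * b ^ 5 * (Y - v ^ 2) := by
    linear_combination (b ^ 2 * (a + b) ^ 2 * a ^ 2) * hZ + (a + b) ^ 2 * hWb
      - ((a - b) * (a + b)) * hΔ2
  have hnn : 0 ≤ (a + b) ^ 2 * (a ^ 2 * Z + b ^ 2 * W)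
      - (a - b) ^ 2 * (a ^ 2 * X + b ^ 2 * Y) - 2 * (a - b) * (a + b) * ΔI := by
    have hb2 : 0 < b ^ 2 := by positivity
    nlinarith [hG, mul_nonneg (by positivity : (0:ℝ) ≤ 2 * a * b)
        (sq_nonneg (a * b * u + b ^ 2 * v - a * (a + b) * q)),
      mul_nonneg (by positivity : (0:ℝ) ≤ 2 * a * b) (sq_nonneg (b * (a * u - b * v))),
      mul_nonneg (by positivity : (0:ℝ) ≤ 4 * a ^ 3 * b ^ 3) (sub_nonneg.mpr hXu),
      mul_nonneg (by positivity : (0:ℝ) ≤ 4 * a * b ^ 5) (sub_nonneg.mpr hYv)]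
  have h4 : ((a - b) / (a + b)) ^ 2 * (a ^ 2 * X + b ^ 2 * Y) + 2 * (a - b) / (a + b) * ΔI
      = ((a - b) ^ 2 * (a ^ 2 * X + b ^ 2 * Y) + 2 * (a - b) * (a + b) * ΔI) / (a + b) ^ 2 := by
    field_simp
  rw [h4, div_le_iff₀ (by positivity)]
  nlinarith [hnn]

set_option maxHeartbeats 1000000 in
/-- Lemma 3 of the paper: energy estimate for disparate masses. -/
theorem energy_estimate_disparate_masses
    (mα mβ : ℝ) (hmα : 0 < mα) (hmβ : 0 < mβ) (hne : mα ≠ mβ)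
    (ρ : ℝ)
    (hρ : ρ = ((Real.sqrt mα - Real.sqrt mβ) / (Real.sqrt mα + Real.sqrt mβ)) ^ 2)
    (ξ ξs ξ' ξs' : EuclideanSpace ℝ (Fin 3))
    (q : ℝ) (hq : 0 ≤ q) (η : EuclideanSpace ℝ (Fin 3)) (hη : ‖η‖ = 1)
    (ΔI : ℝ)
    (h1 : ξ' = ξ - q • η)
    (h2 : ξs' = ξs - (mα / mβ * q) • η)
    (h3 : mα * ‖ξ‖ ^ 2 / 2 + mβ * ‖ξs'‖ ^ 2 / 2
        = mα * ‖ξ'‖ ^ 2 / 2 + mβ * ‖ξs‖ ^ 2 / 2 + ΔI) :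
    0 < ρ ∧ ρ < 1 ∧
    mα * ‖ξ'‖ ^ 2 + mβ * ‖ξs'‖ ^ 2
      ≥ ρ * (mα * ‖ξ‖ ^ 2 + mβ * ‖ξs‖ ^ 2) + (1 + ρ) * ((mα - mβ) / (mα + mβ)) * ΔI ∧
    ρ * (mα * ‖ξ‖ ^ 2 + mβ * ‖ξs‖ ^ 2) + (1 + ρ) * ((mα - mβ) / (mα + mβ)) * ΔI
      ≥ ρ * (mα * ‖ξ‖ ^ 2 + mβ * ‖ξs‖ ^ 2) - 2 * |ΔI| := by
  set a := Real.sqrt mα with ha_def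
  set b := Real.sqrt mβ with hb_def
  have ha : 0 < a := Real.sqrt_pos.mpr hmα
  have hb : 0 < b := Real.sqrt_pos.mpr hmβ
  have ha2 : a ^ 2 = mα := Real.sq_sqrt hmα.le
  have hb2 : b ^ 2 = mβ := Real.sq_sqrt hmβ.le
  have habne : a ≠ b := by
    intro h
    exact hne (by rw [← ha2, ← hb2, h])
  have hab : 0 < a + b := by linarith
  have hρpos : 0 < ρ := by
    rw [hρ, div_pow]
    apply div_pos _ (by positivity)
    have : a - b ≠ 0 := sub_ne_zero.mpr habne
    exact lt_of_le_of_ne (sq_nonneg _) (Ne.symm (pow_ne_zero 2 this))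
  have hρlt : ρ < 1 := by
    rw [hρ, div_pow, div_lt_one (by positivity)]
    nlinarith [mul_pos ha hb]
  have hcoef : (1 + ρ) * ((mα - mβ) / (mα + mβ)) = 2 * (a - b) / (a + b) := by
    rw [← ha2, ← hb2]
    exact auxCoef a b ρ ha hb hρ
  set u : ℝ := inner ℝ ξ η with hu_def
  set v : ℝ := inner ℝ ξs η with hv_def
  have hXu : u ^ 2 ≤ ‖ξ‖ ^ 2 := by
    have h2 := abs_real_inner_le_norm ξ η
    rw [hη, mul_one] at h2
    nlinarith [abs_nonneg (inner ℝ ξ η : ℝ), sq_abs (inner ℝ ξ η : ℝ)]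
  have hYv : v ^ 2 ≤ ‖ξs‖ ^ 2 := by
    have h2 := abs_real_inner_le_norm ξs η
    rw [hη, mul_one] at h2
    nlinarith [abs_nonneg (inner ℝ ξs η : ℝ), sq_abs (inner ℝ ξs η : ℝ)]
  have hZ : ‖ξ'‖ ^ 2 = ‖ξ‖ ^ 2 - 2 * q * u + q ^ 2 := by
    rw [h1, @norm_sub_sq_real, real_inner_smul_right, norm_smul, Real.norm_eq_abs, hη,
      mul_one, sq_abs]
    ring
  have hW : ‖ξs'‖ ^ 2 = ‖ξs‖ ^ 2 - 2 * (mα / mβ * q) * v + (mα / mβ * q) ^ 2 := by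
    rw [h2, @norm_sub_sq_real, real_inner_smul_right, norm_smul, Real.norm_eq_abs, hη,
      mul_one, sq_abs]
    ring
  rw [← ha2, ← hb2] at hW h3
  have hWb := auxW (‖ξs‖ ^ 2) v q a b (‖ξs'‖ ^ 2) hb.ne' hW
  have key := auxKey a b q u v (‖ξ‖ ^ 2) (‖ξs‖ ^ 2) (‖ξ'‖ ^ 2) (‖ξs'‖ ^ 2) ΔI
    ha hb hXu hYv hZ hWb h3
  refine ⟨hρpos, hρlt, ?_, ?_⟩
  · rw [hcoef, hρ, ← ha2, ← hb2]
    exact key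
  · rw [hcoef]
    have h5 : |(a - b) / (a + b)| ≤ 1 := by
      rw [abs_div, abs_of_pos hab, div_le_one hab]
      exact abs_le.mpr ⟨by linarith, by linarith⟩
    have h6 : |(a - b) / (a + b) * ΔI| ≤ |ΔI| := by
      rw [abs_mul]
      exact mul_le_of_le_one_left (abs_nonneg _) h5
    have h7 := neg_abs_le ((a - b) / (a + b) * ΔI)
    have : 2 * (a - b) / (a + b) * ΔI = 2 * ((a - b) / (a + b) * ΔI) := by ring
    rw [this]
    linarith
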